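/- Let ε > 0 and let (C(t), R(t), P_C(t), P_R(t)) be a solution of the customer-dynamics model on [t₀, ∞) with nonnegative initial conditions C(t₀) ≥ 0, R(t₀) ≥ 0, P_C(t₀) ≥ 0, P_R(t₀) ≥ 0. Then C(t) ≥ 0, R(t) ≥ 0, P_C(t) ≥ 0 and P_R(t) ≥ 0 for all t ≥ t₀. -/

import Mathlib

open Real Filter Topology

/-- The customer-dynamics model: `(C, R, PC, PR)` solves the system on `[t0, ∞)`. -/
def IsSolution (l1 l2 l3 l4 l5 l6 l7 b1 b2 eps gam m mR al t0 : ℝ)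
    (C R PC PR : ℝ → ℝ) : Prop :=
  ∀ t : ℝ, t0 ≤ t →
    HasDerivAt C (l7 * R t - (eps + b1 + l5) * C t + (l1 + m * l4) * PC t
      + l2 * R t * PC t) t ∧
    HasDerivAt R (l5 * C t - (eps + b2 + l7) * R t + (l3 + m * l4) * PR t
      + (l2 + mR * l6) * R t * PR t) t ∧
    HasDerivAt PC ((1 - al) * gam + b1 * C t + l7 * PR t - (eps + l5 + l1 + m * l4) * PC t
      - l2 * R t * PC t) t ∧
    HasDerivAt PR (al * gam + b2 * R t + l5 * PC t - (eps + l7 + l3 + m * l4) * PR t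
      - (l2 + mR * l6) * R t * PR t) t

/-- An equilibrium of the customer-dynamics model: all four right-hand sides vanish. -/
def IsEquilibrium (l1 l2 l3 l4 l5 l6 l7 b1 b2 eps gam m mR al : ℝ)
    (C R PC PR : ℝ) : Prop :=
  l7 * R - (eps + b1 + l5) * C + (l1 + m * l4) * PC + l2 * R * PC = 0 ∧
  l5 * C - (eps + b2 + l7) * R + (l3 + m * l4) * PR + (l2 + mR * l6) * R * PR = 0 ∧
  (1 - al) * gam + b1 * C + l7 * PR - (eps + l5 + l1 + m * l4) * PC - l2 * R * PC = 0 ∧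
  al * gam + b2 * R + l5 * PC - (eps + l7 + l3 + m * l4) * PR - (l2 + mR * l6) * R * PR = 0

/-- Lower bound on a product of two quantities bounded below by `-d` and above by `M`. -/
lemma prod_lb_aux {x y M d : ℝ} (hx : -d ≤ x) (hy : -d ≤ y) (hxM : x ≤ M) (hyM : y ≤ M)
    (hM : 0 ≤ M) (hd : 0 ≤ d) : -(M * d) ≤ x * y := by
  rcases le_or_gt 0 x with hx0 | hx0
  · nlinarith [mul_nonneg hx0 (by linarith : (0:ℝ) ≤ y + d), mul_nonneg hd (by linarith : (0:ℝ) ≤ M - x)]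
  rcases le_or_gt 0 y with hy0 | hy0
  · nlinarith [mul_nonneg hy0 (by linarith : (0:ℝ) ≤ x + d), mul_nonneg hd (by linarith : (0:ℝ) ≤ M - y)]
  · nlinarith [mul_pos_of_neg_of_neg hx0 hy0, mul_nonneg hM hd]

/-- If `f` is positive on `[t0, s)` and vanishes at `s > t0`, its derivative at `s`
is nonpositive. -/
lemma first_zero_deriv_nonpos {f : ℝ → ℝ} {d t0 s : ℝ} (hf : HasDerivAt f d s)
    (hs : t0 < s) (h0 : f s = 0) (hpos : ∀ t, t0 ≤ t → t < s → 0 < f t) : d ≤ 0 := by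
  rw [hasDerivAt_iff_tendsto_slope] at hf
  have h1 : Tendsto (slope f s) (𝓝[<] s) (𝓝 d) :=
    hf.mono_left (nhdsWithin_mono _ fun x hx => ne_of_lt hx)
  refine le_of_tendsto h1 ?_
  filter_upwards [Ioo_mem_nhdsLT_of_mem (⟨hs, le_refl s⟩ : s ∈ Set.Ioc t0 s)] with t ht
  rw [slope_def_field, h0]
  exact div_nonpos_of_nonneg_of_nonpos (by linarith [hpos t ht.1.le ht.2]) (by linarith [ht.2])

/-- Derivative of a solution component shifted by `δ e^{K (t - t0)}`. -/
lemma hasDerivAt_addExp (X : ℝ → ℝ) {v : ℝ} (δ K t0 s : ℝ) (hX : HasDerivAt X v s) :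
    HasDerivAt (fun t => X t + δ * Real.exp (K * (t - t0)))
      (v + δ * Real.exp (K * (s - t0)) * K) s := by
  have h1 : HasDerivAt (fun t : ℝ => K * (t - t0)) K s := by
    simpa using ((hasDerivAt_id s).sub_const t0).const_mul K
  have h2 := (Real.hasDerivAt_exp (K * (s - t0))).comp s h1
  have h3 := hX.add (h2.const_mul δ)
  exact h3.congr_deriv (by ring)

theorem positivity_of_solutions (l1 l2 l3 l4 l5 l6 l7 b1 b2 eps gam m mR al : ℝ) (t0 : ℝ) (C R PC PR : ℝ → ℝ)
    (hl1 : 0 ≤ l1) (hl2 : 0 ≤ l2) (hl3 : 0 ≤ l3) (hl4 : 0 ≤ l4) (hl5 : 0 ≤ l5)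
    (hl6 : 0 ≤ l6) (hl7 : 0 ≤ l7) (hb1 : 0 ≤ b1) (hb2 : 0 ≤ b2) (heps0 : 0 ≤ eps)
    (hgam : 0 ≤ gam) (hm : 0 ≤ m) (hmR : 0 ≤ mR) (hal0 : 0 ≤ al) (hal1 : al ≤ 1)
    (heps : 0 < eps)
    (hsol : IsSolution l1 l2 l3 l4 l5 l6 l7 b1 b2 eps gam m mR al t0 C R PC PR)
    (hC0 : 0 ≤ C t0) (hR0 : 0 ≤ R t0) (hPC0 : 0 ≤ PC t0) (hPR0 : 0 ≤ PR t0) :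
    ∀ t : ℝ, t0 ≤ t → 0 ≤ C t ∧ 0 ≤ R t ∧ 0 ≤ PC t ∧ 0 ≤ PR t := by
  intro t1 ht1
  have hCc : ContinuousOn C (Set.Icc t0 t1) :=
    fun t ht => ((hsol t ht.1).1.continuousAt).continuousWithinAt
  have hRc : ContinuousOn R (Set.Icc t0 t1) :=
    fun t ht => ((hsol t ht.1).2.1.continuousAt).continuousWithinAt
  have hPCc : ContinuousOn PC (Set.Icc t0 t1) :=
    fun t ht => ((hsol t ht.1).2.2.1.continuousAt).continuousWithinAt
  have hPRc : ContinuousOn PR (Set.Icc t0 t1) :=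
    fun t ht => ((hsol t ht.1).2.2.2.continuousAt).continuousWithinAt
  -- a uniform bound M on the interval
  obtain ⟨M1, hM1⟩ := isCompact_Icc.exists_bound_of_continuousOn hCc
  obtain ⟨M2, hM2⟩ := isCompact_Icc.exists_bound_of_continuousOn hRc
  obtain ⟨M3, hM3⟩ := isCompact_Icc.exists_bound_of_continuousOn hPCc
  obtain ⟨M4, hM4⟩ := isCompact_Icc.exists_bound_of_continuousOn hPRc
  obtain ⟨M, hM0, hM⟩ : ∃ M : ℝ, 0 ≤ M ∧ ∀ t ∈ Set.Icc t0 t1,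
      |C t| ≤ M ∧ |R t| ≤ M ∧ |PC t| ≤ M ∧ |PR t| ≤ M := by
    refine ⟨max 0 (max (max M1 M2) (max M3 M4)), le_max_left _ _, fun t ht => ?_⟩
    have h1 := hM1 t ht; have h2 := hM2 t ht; have h3 := hM3 t ht; have h4 := hM4 t ht
    rw [Real.norm_eq_abs] at h1 h2 h3 h4
    exact ⟨h1.trans (le_max_of_le_right (le_max_of_le_left (le_max_left _ _))),
      h2.trans (le_max_of_le_right (le_max_of_le_left (le_max_right _ _))),
      h3.trans (le_max_of_le_right (le_max_of_le_right (le_max_left _ _))),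
      h4.trans (le_max_of_le_right (le_max_of_le_right (le_max_right _ _)))⟩
  set K : ℝ := 1 + l1 + l3 + l5 + l7 + b1 + b2 + m * l4 + (2 * l2 + mR * l6) * M with hK
  -- the key perturbation claim
  have key : ∀ δ : ℝ, 0 < δ → ∀ t ∈ Set.Icc t0 t1,
      0 < C t + δ * Real.exp (K * (t - t0)) ∧ 0 < R t + δ * Real.exp (K * (t - t0)) ∧
      0 < PC t + δ * Real.exp (K * (t - t0)) ∧ 0 < PR t + δ * Real.exp (K * (t - t0)) := by
    intro δ hδ
    set E : ℝ → ℝ := fun t => δ * Real.exp (K * (t - t0)) with hE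
    have hEc : Continuous E := by
      apply Continuous.mul continuous_const
      exact Real.continuous_exp.comp (continuous_const.mul (continuous_id.sub continuous_const))
    set g : ℝ → ℝ := fun t => min (min (C t + E t) (R t + E t)) (min (PC t + E t) (PR t + E t))
      with hg
    have hgc : ContinuousOn g (Set.Icc t0 t1) :=
      ((hCc.add hEc.continuousOn).inf (hRc.add hEc.continuousOn)).inf
        ((hPCc.add hEc.continuousOn).inf (hPRc.add hEc.continuousOn))
    suffices hgp : ∀ t ∈ Set.Icc t0 t1, 0 < g t by
      intro t ht
      have h := hgp t ht
      exact ⟨lt_of_lt_of_le h ((min_le_left _ _).trans (min_le_left _ _)),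
        lt_of_lt_of_le h ((min_le_left _ _).trans (min_le_right _ _)),
        lt_of_lt_of_le h ((min_le_right _ _).trans (min_le_left _ _)),
        lt_of_lt_of_le h ((min_le_right _ _).trans (min_le_right _ _))⟩
    by_contra hcon
    push_neg at hcon
    obtain ⟨t2, ht2, hgt2⟩ := hcon
    set S : Set ℝ := Set.Icc t0 t1 ∩ g ⁻¹' Set.Iic 0 with hSdef
    have hSne : S.Nonempty := ⟨t2, ht2, hgt2⟩
    have hSbdd : BddBelow S := ⟨t0, fun x hx => hx.1.1⟩
    have hScl : IsClosed S := hgc.preimage_isClosed_of_isClosed isClosed_Icc isClosed_Iic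
    set s := sInf S with hs
    have hsS : s ∈ S := hScl.csInf_mem hSne hSbdd
    obtain ⟨⟨hst0, hst1⟩, hgs_le⟩ := hsS
    have hgs_le : g s ≤ 0 := hgs_le
    have hlt : ∀ t, t0 ≤ t → t < s → 0 < g t := by
      intro t ht hts
      by_contra h
      push_neg at h
      exact absurd (csInf_le hSbdd ⟨⟨ht, hts.le.trans hst1⟩, h⟩) (not_le.2 hts)
    have hgt0 : 0 < g t0 := by
      have hE0 : E t0 = δ := by simp [hE]
      simp only [hg, hE0]
      exact lt_min (lt_min (by linarith) (by linarith)) (lt_min (by linarith) (by linarith))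
    have ht0s : t0 < s := by
      rcases lt_or_eq_of_le hst0 with h | h
      · exact h
      · exact absurd hgs_le (by rw [← h]; exact not_le.2 hgt0)
    have hgs0 : g s = 0 := by
      refine le_antisymm hgs_le ?_
      have hcl : s ∈ closure (Set.Ioo t0 s) := by
        rw [closure_Ioo (ne_of_lt ht0s)]
        exact ⟨ht0s.le, le_refl s⟩
      have hne : (𝓝[Set.Ioo t0 s] s).NeBot := mem_closure_iff_nhdsWithin_neBot.1 hcl
      have htends : Tendsto g (𝓝[Set.Ioo t0 s] s) (𝓝 (g s)) :=
        (hgc.continuousWithinAt ⟨hst0, hst1⟩).mono_left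
          (nhdsWithin_mono _ (fun x hx => ⟨hx.1.le, hx.2.le.trans hst1⟩))
      refine ge_of_tendsto htends ?_
      filter_upwards [self_mem_nhdsWithin] with t ht
      exact (hlt t ht.1.le ht.2).le
    -- component values at s
    have hCs : 0 ≤ C s + E s := by
      rw [← hgs0]; exact (min_le_left _ _).trans (min_le_left _ _)
    have hRs : 0 ≤ R s + E s := by
      rw [← hgs0]; exact (min_le_left _ _).trans (min_le_right _ _)
    have hPCs : 0 ≤ PC s + E s := by
      rw [← hgs0]; exact (min_le_right _ _).trans (min_le_left _ _)
    have hPRs : 0 ≤ PR s + E s := by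
      rw [← hgs0]; exact (min_le_right _ _).trans (min_le_right _ _)
    have hEpos : 0 < E s := mul_pos hδ (Real.exp_pos _)
    obtain ⟨hCM, hRM, hPCM, hPRM⟩ := hM s ⟨hst0, hst1⟩
    rw [abs_le] at hCM hRM hPCM hPRM
    obtain ⟨hdC, hdR, hdPC, hdPR⟩ := hsol s hst0
    have hzero : C s + E s = 0 ∨ R s + E s = 0 ∨ PC s + E s = 0 ∨ PR s + E s = 0 := by
      have h0 : min (min (C s + E s) (R s + E s)) (min (PC s + E s) (PR s + E s)) = 0 := hgs0
      rcases min_eq_iff.1 h0 with ⟨h, _⟩ | ⟨h, _⟩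
      · rcases min_eq_iff.1 h with ⟨h', _⟩ | ⟨h', _⟩
        · exact Or.inl h'
        · exact Or.inr (Or.inl h')
      · rcases min_eq_iff.1 h with ⟨h', _⟩ | ⟨h', _⟩
        · exact Or.inr (Or.inr (Or.inl h'))
        · exact Or.inr (Or.inr (Or.inr h'))
    rcases hzero with h0 | h0 | h0 | h0
    · -- C hits zero first
      have hpos : ∀ t, t0 ≤ t → t < s → 0 < C t + E t := fun t ht hts =>
        lt_of_lt_of_le (hlt t ht hts) ((min_le_left _ _).trans (min_le_left _ _))
      have hder : HasDerivAt (fun t => C t + E t)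
          ((l7 * R s - (eps + b1 + l5) * C s + (l1 + m * l4) * PC s + l2 * R s * PC s)
            + E s * K) s := by
        simp only [hE]
        have h := hasDerivAt_addExp C δ K t0 s hdC
        convert h using 1
      have hd0 := first_zero_deriv_nonpos hder ht0s h0 hpos
      have hprod : -(M * E s) ≤ R s * PC s :=
        prod_lb_aux (by linarith) (by linarith) hRM.2 hPCM.2 hM0 hEpos.le
      have hCsE : C s = -(E s) := by linarith
      rw [hK, hCsE] at hd0
      linarith [mul_nonneg hl7 hRs, mul_nonneg (by positivity : (0:ℝ) ≤ l1 + m * l4) hPCs,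
        mul_nonneg hl2 (by linarith : (0:ℝ) ≤ R s * PC s + M * E s),
        mul_nonneg (by positivity : (0:ℝ) ≤ eps + b1 + l5) hEpos.le,
        mul_nonneg hl3 hEpos.le, mul_nonneg hl5 hEpos.le, mul_nonneg hb1 hEpos.le,
        mul_nonneg hb2 hEpos.le,
        mul_nonneg (mul_nonneg hmR hl6) (mul_nonneg hM0 hEpos.le),
        mul_nonneg (mul_nonneg hl2 hM0) hEpos.le, hEpos]
    · -- R hits zero first
      have hpos : ∀ t, t0 ≤ t → t < s → 0 < R t + E t := fun t ht hts =>
        lt_of_lt_of_le (hlt t ht hts) ((min_le_left _ _).trans (min_le_right _ _))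
      have hder : HasDerivAt (fun t => R t + E t)
          ((l5 * C s - (eps + b2 + l7) * R s + (l3 + m * l4) * PR s
            + (l2 + mR * l6) * R s * PR s) + E s * K) s := by
        simp only [hE]
        have h := hasDerivAt_addExp R δ K t0 s hdR
        convert h using 1
      have hd0 := first_zero_deriv_nonpos hder ht0s h0 hpos
      have hRsE : R s = -(E s) := by linarith
      rw [hK, hRsE] at hd0
      linarith [mul_nonneg hl5 hCs, mul_nonneg (by positivity : (0:ℝ) ≤ l3 + m * l4) hPRs,
        mul_nonneg (by positivity : (0:ℝ) ≤ l2 + mR * l6)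
          (mul_nonneg (by linarith [hPRM.2] : (0:ℝ) ≤ M - PR s) hEpos.le),
        mul_nonneg (by positivity : (0:ℝ) ≤ eps + b2 + l7) hEpos.le,
        mul_nonneg hl1 hEpos.le, mul_nonneg hl7 hEpos.le, mul_nonneg hb1 hEpos.le,
        mul_nonneg hb2 hEpos.le,
        mul_nonneg (mul_nonneg hl2 hM0) hEpos.le, hEpos]
    · -- PC hits zero first
      have hpos : ∀ t, t0 ≤ t → t < s → 0 < PC t + E t := fun t ht hts =>
        lt_of_lt_of_le (hlt t ht hts) ((min_le_right _ _).trans (min_le_left _ _))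
      have hder : HasDerivAt (fun t => PC t + E t)
          (((1 - al) * gam + b1 * C s + l7 * PR s - (eps + l5 + l1 + m * l4) * PC s
            - l2 * R s * PC s) + E s * K) s := by
        simp only [hE]
        have h := hasDerivAt_addExp PC δ K t0 s hdPC
        convert h using 1
      have hd0 := first_zero_deriv_nonpos hder ht0s h0 hpos
      have hPCsE : PC s = -(E s) := by linarith
      rw [hK, hPCsE] at hd0
      linarith [mul_nonneg (by linarith : (0:ℝ) ≤ 1 - al) hgam,
        mul_nonneg hb1 hCs, mul_nonneg hl7 hPRs,
        mul_nonneg hl2 (mul_nonneg (by linarith [hRM.1] : (0:ℝ) ≤ R s + M) hEpos.le),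
        mul_nonneg (by positivity : (0:ℝ) ≤ eps + l5 + l1 + m * l4) hEpos.le,
        mul_nonneg hl1 hEpos.le, mul_nonneg hl3 hEpos.le, mul_nonneg hl5 hEpos.le,
        mul_nonneg hb2 hEpos.le, mul_nonneg (mul_nonneg hm hl4) hEpos.le,
        mul_nonneg (mul_nonneg hl2 hM0) hEpos.le,
        mul_nonneg (mul_nonneg hmR hl6) (mul_nonneg hM0 hEpos.le), hEpos]
    · -- PR hits zero first
      have hpos : ∀ t, t0 ≤ t → t < s → 0 < PR t + E t := fun t ht hts =>
        lt_of_lt_of_le (hlt t ht hts) ((min_le_right _ _).trans (min_le_right _ _))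
      have hder : HasDerivAt (fun t => PR t + E t)
          ((al * gam + b2 * R s + l5 * PC s - (eps + l7 + l3 + m * l4) * PR s
            - (l2 + mR * l6) * R s * PR s) + E s * K) s := by
        simp only [hE]
        have h := hasDerivAt_addExp PR δ K t0 s hdPR
        convert h using 1
      have hd0 := first_zero_deriv_nonpos hder ht0s h0 hpos
      have hPRsE : PR s = -(E s) := by linarith
      rw [hK, hPRsE] at hd0
      linarith [mul_nonneg hal0 hgam,
        mul_nonneg hb2 hRs, mul_nonneg hl5 hPCs,
        mul_nonneg (by positivity : (0:ℝ) ≤ l2 + mR * l6)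
          (mul_nonneg (by linarith [hRM.1] : (0:ℝ) ≤ R s + M) hEpos.le),
        mul_nonneg (by positivity : (0:ℝ) ≤ eps + l7 + l3 + m * l4) hEpos.le,
        mul_nonneg hl1 hEpos.le, mul_nonneg hl3 hEpos.le, mul_nonneg hl7 hEpos.le,
        mul_nonneg hb1 hEpos.le, mul_nonneg (mul_nonneg hm hl4) hEpos.le,
        mul_nonneg (mul_nonneg hl2 hM0) hEpos.le, hEpos]
  -- conclude by letting δ → 0
  have hexp : (0:ℝ) < Real.exp (K * (t1 - t0)) := Real.exp_pos _
  have final : ∀ (X : ℝ → ℝ),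
      (∀ δ : ℝ, 0 < δ → 0 < X t1 + δ * Real.exp (K * (t1 - t0))) → 0 ≤ X t1 := by
    intro X hX
    by_contra hneg
    push_neg at hneg
    have hδ : 0 < -X t1 / Real.exp (K * (t1 - t0)) := div_pos (by linarith) hexp
    have h := hX _ hδ
    have heq : -X t1 / Real.exp (K * (t1 - t0)) * Real.exp (K * (t1 - t0)) = -X t1 :=
      div_mul_cancel₀ _ (ne_of_gt hexp)
    linarith
  exact ⟨final C (fun δ hδ => (key δ hδ t1 ⟨ht1, le_refl t1⟩).1),
    final R (fun δ hδ => (key δ hδ t1 ⟨ht1, le_refl t1⟩).2.1),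
    final PC (fun δ hδ => (key δ hδ t1 ⟨ht1, le_refl t1⟩).2.2.1),
    final PR (fun δ hδ => (key δ hδ t1 ⟨ht1, le_refl t1⟩).2.2.2)⟩
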